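/- Let D be an integral domain with fraction field k, and let V be a valuation domain together with a surjective ring map V → k whose kernel is the maximal ideal m of V (i.e., V has residue field k). Let R be the pullback of the diagram D → k ← V, that is, R = {v ∈ V : the image of v in k lies in D} (equivalently R = D + m). Then R is perinormal if and only if D is perinormal. -/

import Mathlib

/-- A ring homomorphism `f : A →+* B` satisfies going-down: whenever `p₁ ⊆ p₂` are primes of `A`
and `Q₂` is a prime of `B` contracting to `p₂`, there is a prime `Q₁ ⊆ Q₂` of `B`
contracting to `p₁`. -/
def GoingDownHom {A B : Type*} [CommRing A] [CommRing B] (f : A →+* B) : Prop :=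
  ∀ (p₁ p₂ : Ideal A), p₁.IsPrime → p₂.IsPrime → p₁ ≤ p₂ →
    ∀ Q₂ : Ideal B, Q₂.IsPrime → Q₂.comap f = p₂ →
      ∃ Q₁ : Ideal B, Q₁.IsPrime ∧ Q₁ ≤ Q₂ ∧ Q₁.comap f = p₁

/-- The canonical map from the localization of a subring `A ⊆ B` at a submonoid `W ⊆ A`
to the localization of `B` at the image of `W` in `B`. -/
noncomputable def locMap {B : Type*} [CommRing B] (A : Subring B) (W : Submonoid A) :
    Localization W →+* Localization (W.map A.subtype) :=
  IsLocalization.lift (M := W) (S := Localization W)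
    (g := (algebraMap B (Localization (W.map A.subtype))).comp A.subtype)
    (fun y => IsLocalization.map_units (M := W.map A.subtype) (Localization (W.map A.subtype))
      ⟨A.subtype y, ⟨y, y.2, rfl⟩⟩)

/-- A subring `A ⊆ B` is perinormal in `B` at the prime `p` of `A`:  the localization `A_p`
(i.e. the image of `Localization.AtPrime p` in `B_{A∖p}`) is the only local ring `T` between
`A_p` and `B_{A∖p}` whose maximal ideal contracts to `pA_p` and which satisfies going-down
over `A_p`. -/
def PeriAt {B : Type*} [CommRing B] (A : Subring B) (p : Ideal A) (hp : p.IsPrime) : Prop :=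
  haveI := hp
  ∀ (T : Subring (Localization (p.primeCompl.map A.subtype)))
    (hT : (locMap A p.primeCompl).range ≤ T),
    IsLocalRing T →
    (∀ M : Ideal T, M.IsMaximal →
      M.comap ((locMap A p.primeCompl).codRestrict T (fun x => hT ⟨x, rfl⟩)) =
        IsLocalRing.maximalIdeal (Localization.AtPrime p)) →
    GoingDownHom ((locMap A p.primeCompl).codRestrict T (fun x => hT ⟨x, rfl⟩)) →
    T = (locMap A p.primeCompl).range

/-- A subring `A` of `B` is perinormal in `B`. -/
def PerinormalIn {B : Type*} [CommRing B] (A : Subring B) : Prop :=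
  ∀ (p : Ideal A) (hp : p.IsPrime), PeriAt A p hp

/-- An integral domain `R` is perinormal:  every local overring of `R`
(local ring between `R` and its fraction field) satisfying going-down over `R`
is a localization of `R` at a prime ideal. -/
def PerinormalDomain (R : Type*) [CommRing R] [IsDomain R] : Prop :=
  ∀ (T : Subring (FractionRing R)) (hT : (algebraMap R (FractionRing R)).range ≤ T),
    IsLocalRing T →
    GoingDownHom ((algebraMap R (FractionRing R)).codRestrict T (fun x => hT ⟨x, rfl⟩)) →
    ∃ p : Ideal R, p.IsPrime ∧
      (T : Set (FractionRing R)) =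
        {x | ∃ r s : R, s ∉ p ∧
          x * algebraMap R (FractionRing R) s = algebraMap R (FractionRing R) r}

/-- A subring `A ⊆ B` is apparently fragile in `B`: for every ring `C` with `A ⊊ C ⊆ B`
there are a minimal prime `p` of `A` and distinct primes `P, Q` of `C` contracting to `p`. -/
def ApparentlyFragile {B : Type*} [CommRing B] (A : Subring B) : Prop :=
  ∀ (C : Subring B) (hAC : A ≤ C), A ≠ C →
    ∃ p ∈ minimalPrimes A, ∃ P Q : Ideal C, P.IsPrime ∧ Q.IsPrime ∧ P ≠ Q ∧
      P.comap (Subring.inclusion hAC) = p ∧ Q.comap (Subring.inclusion hAC) = p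

/-- A subring `A ⊆ B` is fragile in `B`: for every prime `P` of `A`, the extension
`A_P ⊆ B_{A∖P}` is apparently fragile. -/
def Fragile {B : Type*} [CommRing B] (A : Subring B) : Prop :=
  ∀ (P : Ideal A) (hP : P.IsPrime),
    haveI := hP
    ApparentlyFragile (locMap A P.primeCompl).range

/-- A subring `A ⊆ B` is globally fragile in `B`: for every multiplicative subset `W` of `A`,
the extension `A_W ⊆ B_W` is apparently fragile. -/
def GloballyFragile {B : Type*} [CommRing B] (A : Subring B) : Prop :=
  ∀ W : Submonoid A, ApparentlyFragile (locMap A W).range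

/-- An integral domain `S` is a generalized Krull domain: (i) `S` is the intersection of its
localizations at height-one primes (inside its fraction field), (ii) every nonzero element lies
in only finitely many height-one primes, and (iii) the localization at every height-one prime
is a valuation ring. -/
def IsGenKrull (S : Type*) [CommRing S] [IsDomain S] : Prop :=
  (∀ x : FractionRing S,
      (∀ (p : Ideal S) (hp : p.IsPrime), Order.height (⟨p, hp⟩ : PrimeSpectrum S) = 1 →
        ∃ a s : S, s ∉ p ∧ x * algebraMap S (FractionRing S) s = algebraMap S (FractionRing S) a) →
      ∃ r : S, algebraMap S (FractionRing S) r = x) ∧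
  (∀ s : S, s ≠ 0 →
      {p : Ideal S | ∃ hp : p.IsPrime, Order.height (⟨p, hp⟩ : PrimeSpectrum S) = 1 ∧ s ∈ p}.Finite) ∧
  (∀ (p : Ideal S) (hp : p.IsPrime), Order.height (⟨p, hp⟩ : PrimeSpectrum S) = 1 →
      haveI := hp
      ValuationRing (Localization.AtPrime p))

/-- A prime ideal `Q` has height one. -/
def HeightOne {S : Type*} [CommRing S] (Q : Ideal S) : Prop :=
  ∃ hQ : Q.IsPrime, Order.height (⟨Q, hQ⟩ : PrimeSpectrum S) = 1

set_option linter.unusedSectionVars false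

section DMbasic

variable {D V : Type*} [CommRing D] [IsDomain D] [CommRing V] [IsDomain V] [ValuationRing V]
variable {π : V →+* FractionRing D} {R : Subring V}

theorem DM.memR (hR : R = ((algebraMap D (FractionRing D)).range).comap π) (v : V) :
    v ∈ R ↔ π v ∈ (algebraMap D (FractionRing D)).range := by
  subst hR; rfl

theorem DM.mem_m (hker : RingHom.ker π = IsLocalRing.maximalIdeal V) (v : V) :
    v ∈ IsLocalRing.maximalIdeal V ↔ π v = 0 := by
  rw [← hker]; rfl

theorem DM.m_le_R (hker : RingHom.ker π = IsLocalRing.maximalIdeal V)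
    (hR : R = ((algebraMap D (FractionRing D)).range).comap π)
    {v : V} (hv : v ∈ IsLocalRing.maximalIdeal V) : v ∈ R := by
  rw [DM.memR hR, (DM.mem_m hker v).mp hv]
  exact ⟨0, (map_zero _)⟩

theorem DM.mem_m_iff_not_unit (v : V) :
    v ∈ IsLocalRing.maximalIdeal V ↔ ¬ IsUnit v := by
  simp [IsLocalRing.mem_maximalIdeal, mem_nonunits_iff]

theorem DM.exists_rep (hsurj : Function.Surjective π)
    (hR : R = ((algebraMap D (FractionRing D)).range).comap π) (d : D) :
    ∃ r : R, π r = algebraMap D (FractionRing D) d := by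
  obtain ⟨v, hv⟩ := hsurj (algebraMap D (FractionRing D) d)
  exact ⟨⟨v, (DM.memR hR v).mpr ⟨d, hv.symm⟩⟩, hv⟩

/-- every element of V is a fraction r/s with r s ∈ R, s ∉ m -/
theorem DM.frac (hsurj : Function.Surjective π)
    (hker : RingHom.ker π = IsLocalRing.maximalIdeal V)
    (hR : R = ((algebraMap D (FractionRing D)).range).comap π) (v : V) :
    ∃ r s : R, (s : V) ∉ IsLocalRing.maximalIdeal V ∧ v * s = r := by
  obtain ⟨⟨d1, d2⟩, hd⟩ := IsLocalization.surj (nonZeroDivisors D) (π v)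
  obtain ⟨r1, hr1⟩ := DM.exists_rep hsurj hR d1
  obtain ⟨r2, hr2⟩ := DM.exists_rep hsurj hR (d2 : D)
  have hm : v * r2 - r1 ∈ IsLocalRing.maximalIdeal V := by
    rw [DM.mem_m hker, map_sub, map_mul, hr1, hr2, hd, sub_self]
  refine ⟨r1 + ⟨_, DM.m_le_R hker hR hm⟩, r2, ?_, ?_⟩
  · rw [DM.mem_m hker, hr2]
    intro h
    exact nonZeroDivisors.coe_ne_zero d2 ((IsFractionRing.injective D (FractionRing D))
      (by rw [h, map_zero]))
  · push_cast
    ring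

theorem DM.exists_iota (hsurj : Function.Surjective π)
    (hker : RingHom.ker π = IsLocalRing.maximalIdeal V)
    (hR : R = ((algebraMap D (FractionRing D)).range).comap π) :
    ∃ ι : V →+* FractionRing R, Function.Injective ι ∧
      ∀ r : R, ι r = algebraMap R (FractionRing R) r := by
  letI : Algebra R (FractionRing V) := ((algebraMap V (FractionRing V)).comp R.subtype).toAlgebra
  have halg : ∀ r : R, algebraMap R (FractionRing V) r = algebraMap V (FractionRing V) (r : V) :=
    fun _ => rfl
  haveI : IsFractionRing R (FractionRing V) := by
    refine (isLocalization_iff _ _).mpr ⟨?_, ?_, ?_⟩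
    · rintro ⟨s, hs⟩
      have hs0 : (s : V) ≠ 0 := by
        intro h
        exact mem_nonZeroDivisors_iff_ne_zero.mp hs (Subtype.ext h)
      rw [halg]
      exact isUnit_iff_ne_zero.mpr ((map_ne_zero_iff _
        (IsFractionRing.injective V (FractionRing V))).mpr hs0)
    · intro z
      obtain ⟨⟨v1, v2⟩, hv⟩ := IsLocalization.surj (nonZeroDivisors V) z
      obtain ⟨r1, s1, hs1, he1⟩ := DM.frac hsurj hker hR v1
      obtain ⟨r2, s2, hs2, he2⟩ := DM.frac hsurj hker hR (v2 : V)
      have hs1' : (s1 : V) ≠ 0 := fun h =>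
        hs1 (h ▸ (IsLocalRing.maximalIdeal V).zero_mem)
      have hs2' : (s2 : V) ≠ 0 := fun h =>
        hs2 (h ▸ (IsLocalRing.maximalIdeal V).zero_mem)
      have hv2 : (v2 : V) ≠ 0 := nonZeroDivisors.coe_ne_zero v2
      have hr2 : (r2 : V) ≠ 0 := by
        rw [← he2]; exact mul_ne_zero hv2 hs2'
      refine ⟨⟨r1 * s2, ⟨r2 * s1, mem_nonZeroDivisors_iff_ne_zero.mpr ?_⟩⟩, ?_⟩
      · intro h
        have : (r2 : V) * s1 = 0 := by exact_mod_cast congrArg (Subtype.val) h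
        exact (mul_ne_zero hr2 hs1') this
      · rw [halg, halg]
        have h2 : ((r2 * s1 : R) : V) = (v2 : V) * s2 * s1 := by
          push_cast [← he2]; ring
        have h1 : ((r1 * s2 : R) : V) = v1 * s1 * s2 := by
          push_cast [← he1]; ring
        have hv' : z * algebraMap V (FractionRing V) (v2 : V) =
            algebraMap V (FractionRing V) v1 := hv
        simp only [h2, h1]
        simp only [map_mul, ← mul_assoc]
        rw [hv']
        ring
    · intro r1 r2 h
      rw [halg, halg] at h
      refine ⟨1, ?_⟩
      have := (IsFractionRing.injective V (FractionRing V)) h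
      simp [Subtype.ext this]
  set e := FractionRing.algEquiv R (FractionRing V) with he
  refine ⟨(e.symm.toRingEquiv.toRingHom).comp (algebraMap V (FractionRing V)), ?_, ?_⟩
  · intro a b hab
    exact (IsFractionRing.injective V (FractionRing V))
      (EquivLike.injective e.symm (by exact hab))
  · intro r
    have : algebraMap V (FractionRing V) (r : V) = algebraMap R (FractionRing V) r :=
      (halg r).symm
    simp only [RingHom.comp_apply, RingEquiv.toRingHom_eq_coe, RingHom.coe_coe, this]
    exact e.symm.commutes r

end DMbasic
section DMpart2
variable {D V : Type*} [CommRing D] [IsDomain D] [CommRing V] [IsDomain V] [ValuationRing V]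
variable {π : V →+* FractionRing D} {R : Subring V}

theorem DM.exists_rho (hR : R = ((algebraMap D (FractionRing D)).range).comap π) :
    ∃ ρ : R →+* D, ∀ r : R, algebraMap D (FractionRing D) (ρ r) = π r := by
  have h : ∀ r : R, ∃ d : D, algebraMap D (FractionRing D) d = π r := by
    intro r
    obtain ⟨d, hd⟩ := (DM.memR hR (r : V)).mp r.2
    exact ⟨d, hd⟩
  have spec : ∀ r : R, algebraMap D (FractionRing D) ((h r).choose) = π r :=
    fun r => (h r).choose_spec
  have inj := IsFractionRing.injective D (FractionRing D)
  refine ⟨{ toFun := fun r => (h r).choose,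
            map_one' := inj (by push_cast [spec]; simp),
            map_mul' := fun a b => inj (by simp only [map_mul, spec]; push_cast [map_mul]; ring),
            map_zero' := inj (by push_cast [spec]; simp),
            map_add' := fun a b => inj (by simp only [map_add, spec]; push_cast [map_add]; ring) },
    spec⟩

variable {ρ : R →+* D} (hρ : ∀ r : R, algebraMap D (FractionRing D) (ρ r) = π r)
include hρ

theorem DM.rho_surj (hsurj : Function.Surjective π)
    (hR : R = ((algebraMap D (FractionRing D)).range).comap π) :
    Function.Surjective ρ := by
  intro d
  obtain ⟨r, hr⟩ := DM.exists_rep hsurj hR d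
  exact ⟨r, IsFractionRing.injective D (FractionRing D) (by rw [hρ, hr])⟩

theorem DM.rho_ker (hker : RingHom.ker π = IsLocalRing.maximalIdeal V) (r : R) :
    ρ r = 0 ↔ (r : V) ∈ IsLocalRing.maximalIdeal V := by
  rw [DM.mem_m hker, ← hρ]
  constructor
  · intro h; rw [h, map_zero]
  · intro h
    exact IsFractionRing.injective D (FractionRing D) (by rw [h, map_zero])

end DMpart2

section DMpart3
variable {D V : Type*} [CommRing D] [IsDomain D] [CommRing V] [IsDomain V] [ValuationRing V]
variable {π : V →+* FractionRing D} {R : Subring V}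
variable {ι : V →+* FractionRing R} (hιi : Function.Injective ι)
  (hι2 : ∀ r : R, ι r = algebraMap R (FractionRing R) r)

include hιi hι2

/-- valuation dichotomy in the fraction field of R -/
theorem DM.dichot (hsurj : Function.Surjective π)
    (hker : RingHom.ker π = IsLocalRing.maximalIdeal V)
    (hR : R = ((algebraMap D (FractionRing D)).range).comap π)
    (x : FractionRing R) (hx : x ≠ 0) :
    (∃ v : V, ι v = x) ∨ (∃ v : V, x * ι v = 1) := by
  obtain ⟨⟨r, s⟩, he⟩ := IsLocalization.surj (nonZeroDivisors R) x
  simp only at he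
  have hs0 : (s : R) ≠ 0 := nonZeroDivisors.coe_ne_zero s
  have hsι : ι ((s : R) : V) ≠ 0 := by
    rw [map_ne_zero_iff _ hιi]
    exact fun h => hs0 (Subtype.ext h)
  have hr0 : r ≠ 0 := by
    intro h
    subst h
    rw [map_zero] at he
    exact hx (by
      have := mul_eq_zero.mp he
      rcases this with h | h
      · exact h
      · rw [← hι2] at h; exact absurd h hsι)
  have hrι : ι (r : V) ≠ 0 := by
    rw [map_ne_zero_iff _ hιi]
    exact fun h => hr0 (Subtype.ext h)
  have he' : x * ι ((s:R) : V) = ι ((r : V)) := by rw [hι2, hι2]; exact he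
  obtain ⟨c, hc | hc⟩ := ValuationRing.cond ((s:R) : V) ((r:R) : V)
  · left
    refine ⟨c, ?_⟩
    have : x * ι ((s:R):V) = ι c * ι ((s:R):V) := by
      rw [he', ← hc, map_mul]; exact mul_comm _ _
    exact (mul_right_cancel₀ hsι this).symm
  · right
    refine ⟨c, ?_⟩
    have : (x * ι c) * ι ((r:R):V) = 1 * ι ((r:R):V) := by
      rw [one_mul, mul_assoc, ← map_mul, mul_comm c, hc, ← he']
    exact mul_right_cancel₀ hrι this

end DMpart3

section DMpart4
variable {D V : Type*} [CommRing D] [IsDomain D] [CommRing V] [IsDomain V] [ValuationRing V]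
variable {π : V →+* FractionRing D} {R : Subring V}

/-- a prime of R not containing m is contained in m -/
theorem DM.prime_sub_m (hker : RingHom.ker π = IsLocalRing.maximalIdeal V)
    (hR : R = ((algebraMap D (FractionRing D)).range).comap π)
    (p : Ideal R) (hp : p.IsPrime)
    (h : ∃ x : R, (x : V) ∈ IsLocalRing.maximalIdeal V ∧ x ∉ p) :
    ∀ y ∈ p, ((y : R) : V) ∈ IsLocalRing.maximalIdeal V := by
  obtain ⟨x, hxm, hxp⟩ := h
  intro y hy
  by_contra hym
  obtain ⟨u, hu⟩ := ((DM.mem_m_iff_not_unit ((y:R):V)).not_left.mp (by simpa using hym)).exists_right_inv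
  have hxu : (x : V) * u ∈ IsLocalRing.maximalIdeal V :=
    Ideal.mul_mem_right _ _ hxm
  have : x = y * ⟨(x:V) * u, DM.m_le_R hker hR hxu⟩ := by
    apply Subtype.ext
    push_cast
    calc (x : V) = ((y:V) * u) * x := by rw [hu, one_mul]
      _ = (y:V) * ((x:V) * u) := by ring
  exact hxp (this ▸ Ideal.mul_mem_right _ _ hy)

/-- a prime of R contained in m is stable under multiplication by V -/
theorem DM.videal (hker : RingHom.ker π = IsLocalRing.maximalIdeal V)
    (hR : R = ((algebraMap D (FractionRing D)).range).comap π)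
    (p : Ideal R) (hp : p.IsPrime)
    (hpm : ∀ y ∈ p, ((y : R) : V) ∈ IsLocalRing.maximalIdeal V)
    (v : V) {y : R} (hy : y ∈ p) : ∃ z ∈ p, (z : V) = v * y := by
  have hvy : v * (y : V) ∈ IsLocalRing.maximalIdeal V :=
    Ideal.mul_mem_left _ _ (hpm y hy)
  have hv2y : v * v * (y : V) ∈ IsLocalRing.maximalIdeal V :=
    Ideal.mul_mem_left _ _ (hpm y hy)
  set z : R := ⟨v * y, DM.m_le_R hker hR hvy⟩ with hz
  have hzz : z * z = ⟨v * v * y, DM.m_le_R hker hR hv2y⟩ * y := by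
    apply Subtype.ext; push_cast; ring
  have : z ∈ p := by
    rcases hp.mem_or_mem (hzz ▸ Ideal.mul_mem_left _ _ hy : z * z ∈ p) with h | h
    · exact h
    · exact h
  exact ⟨z, this, rfl⟩

end DMpart4

section Abstract
variable {R' D' A' B' : Type*} [CommRing R'] [CommRing D'] [CommRing A'] [CommRing B']
variable {f : R' →+* A'} {g : D' →+* B'} {ρ' : R' →+* D'} {ψ' : A' →+* B'}
variable (hρs : Function.Surjective ρ')
  (hψs : Function.Surjective ψ')
  (hcomm : ∀ r : R', ψ' (f r) = g (ρ' r))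
  (hker : ∀ a : A', ψ' a = 0 → ∃ r : R', ρ' r = 0 ∧ f r = a)

include hρs hψs hcomm hker

theorem DM.GDdown (hGD : GoingDownHom f) : GoingDownHom g := by
  intro p1 p2 hp1 hp2 h12 Q2 hQ2 hQ2c
  have hp1' : (p1.comap ρ').IsPrime := hp1.comap ρ'
  have hp2' : (p2.comap ρ').IsPrime := hp2.comap ρ'
  haveI := hQ2
  have hQ2' : (Q2.comap ψ').IsPrime := hQ2.comap ψ'
  have hc : (Q2.comap ψ').comap f = p2.comap ρ' := by
    ext r
    simp only [Ideal.mem_comap, hcomm, ← hQ2c, Ideal.mem_comap]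
  obtain ⟨Q1', hQ1', hle, hQ1'c⟩ :=
    hGD (p1.comap ρ') (p2.comap ρ') hp1' hp2' (Ideal.comap_mono h12) (Q2.comap ψ') hQ2' hc
  haveI := hQ1'
  have hkerQ : RingHom.ker ψ' ≤ Q1' := by
    intro a ha
    obtain ⟨r, hr0, hfr⟩ := hker a ha
    have : r ∈ p1.comap ρ' := by
      simp [Ideal.mem_comap, hr0]
    rw [← hQ1'c] at this
    exact hfr ▸ this
  refine ⟨Q1'.map ψ', Ideal.map_isPrime_of_surjective hψs hkerQ, ?_, ?_⟩
  · calc Q1'.map ψ' ≤ (Q2.comap ψ').map ψ' := Ideal.map_mono hle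
      _ ≤ Q2 := Ideal.map_comap_le
  · ext d
    obtain ⟨r, rfl⟩ := hρs d
    rw [Ideal.mem_comap, ← hcomm, Ideal.mem_map_iff_of_surjective _ hψs]
    constructor
    · rintro ⟨a, ha, hae⟩
      have : a - f r ∈ RingHom.ker ψ' := by
        simp [RingHom.mem_ker, map_sub, hae]
      have h2 : f r ∈ Q1' := by
        have := Q1'.sub_mem ha (hkerQ this)
        simpa using this
      rw [← Ideal.mem_comap, hQ1'c, Ideal.mem_comap] at h2
      exact h2
    · intro hd
      refine ⟨f r, ?_, rfl⟩
      rw [← Ideal.mem_comap, hQ1'c, Ideal.mem_comap]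
      exact hd

theorem DM.GDup_case (hGD : GoingDownHom g) (p1 p2 : Ideal R') (hp1 : p1.IsPrime)
    (hp2 : p2.IsPrime) (h12 : p1 ≤ p2) (hker1 : ∀ r : R', ρ' r = 0 → r ∈ p1)
    (Q2 : Ideal A') (hQ2 : Q2.IsPrime) (hQ2c : Q2.comap f = p2) :
    ∃ Q1 : Ideal A', Q1.IsPrime ∧ Q1 ≤ Q2 ∧ Q1.comap f = p1 := by
  haveI := hp1; haveI := hp2; haveI := hQ2
  have hkerρ1 : RingHom.ker ρ' ≤ p1 := fun r hr => hker1 r hr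
  have hkerρ2 : RingHom.ker ρ' ≤ p2 := le_trans hkerρ1 h12
  have hkerψ : RingHom.ker ψ' ≤ Q2 := by
    intro a ha
    obtain ⟨r, hr0, hfr⟩ := hker a ha
    have : r ∈ p2 := h12 (hker1 r hr0)
    rw [← hQ2c, Ideal.mem_comap] at this
    exact hfr ▸ this
  have hcm : ∀ (p : Ideal R'), RingHom.ker ρ' ≤ p → (p.map ρ').comap ρ' = p := by
    intro p hp
    rw [Ideal.comap_map_of_surjective _ hρs, sup_eq_left.mpr]
    intro r hr
    exact hp (by simpa [RingHom.mem_ker] using hr)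
  have hcmψ : (Q2.map ψ').comap ψ' = Q2 := by
    rw [Ideal.comap_map_of_surjective _ hψs, sup_eq_left.mpr]
    intro a ha
    exact hkerψ (by simpa [RingHom.mem_ker] using ha)
  have hmp1 : (p1.map ρ').IsPrime := Ideal.map_isPrime_of_surjective hρs hkerρ1
  have hmp2 : (p2.map ρ').IsPrime := Ideal.map_isPrime_of_surjective hρs hkerρ2
  have hmQ2 : (Q2.map ψ').IsPrime := Ideal.map_isPrime_of_surjective hψs hkerψ
  have hcg : (Q2.map ψ').comap g = p2.map ρ' := by
    ext d
    obtain ⟨r, rfl⟩ := hρs d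
    rw [Ideal.mem_comap, ← hcomm, Ideal.mem_map_iff_of_surjective _ hψs]
    constructor
    · rintro ⟨a, ha, hae⟩
      have h0 : a - f r ∈ RingHom.ker ψ' := by simp [RingHom.mem_ker, map_sub, hae]
      have h2 : f r ∈ Q2 := by
        have := Q2.sub_mem ha (hkerψ h0); simpa using this
      have h3 : r ∈ p2 := by rw [← hQ2c]; exact h2
      exact Ideal.mem_map_of_mem ρ' h3
    · intro hd
      have : r ∈ (p2.map ρ').comap ρ' := hd
      rw [hcm p2 hkerρ2, ← hQ2c] at this
      exact ⟨f r, this, rfl⟩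
  obtain ⟨Q1', hQ1', hle, hQ1'c⟩ := hGD (p1.map ρ') (p2.map ρ') hmp1 hmp2
    (Ideal.map_mono h12) (Q2.map ψ') hmQ2 hcg
  haveI := hQ1'
  refine ⟨Q1'.comap ψ', hQ1'.comap ψ', ?_, ?_⟩
  · calc Q1'.comap ψ' ≤ (Q2.map ψ').comap ψ' := Ideal.comap_mono hle
      _ = Q2 := hcmψ
  · ext r
    rw [Ideal.mem_comap, Ideal.mem_comap, hcomm, ← Ideal.mem_comap, hQ1'c,
      ← Ideal.mem_comap (f := ρ'), hcm p1 hkerρ1]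

end Abstract

theorem DM.local_of_hom {A B : Type*} [CommRing A] [CommRing B] [Nontrivial A]
    (f : A →+* B) (hloc : IsLocalRing B) (h : ∀ a : A, IsUnit (f a) → IsUnit a) :
    IsLocalRing A := by
  apply IsLocalRing.of_nonunits_add
  intro a b ha hb
  rw [mem_nonunits_iff] at ha hb ⊢
  intro hu
  have h1 : f a ∈ nonunits B := mem_nonunits_iff.mpr (fun hfa => ha (h a hfa))
  have h2 : f b ∈ nonunits B := mem_nonunits_iff.mpr (fun hfb => hb (h b hfb))
  have h3 := IsLocalRing.nonunits_add h1 h2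
  rw [mem_nonunits_iff, ← map_add] at h3
  exact h3 (hu.map f)
section DMsmall
variable {D V : Type*} [CommRing D] [IsDomain D] [CommRing V] [IsDomain V] [ValuationRing V]
variable {π : V →+* FractionRing D} {R : Subring V}

set_option synthInstance.maxHeartbeats 1000000 in
set_option maxHeartbeats 2000000 in
theorem DM.small_prime (hker : RingHom.ker π = IsLocalRing.maximalIdeal V)
    (hR : R = ((algebraMap D (FractionRing D)).range).comap π)
    {ι : V →+* FractionRing R} (hιi : Function.Injective ι)
    {A : Subring (FractionRing R)} (hA : ∀ a : A, ∃ w : V, ι w = (a : FractionRing R))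
    {f : R →+* A} (hf : ∀ r : R, ((f r : A) : FractionRing R) = ι ((r : R) : V))
    (p1 : Ideal R) (hp1 : p1.IsPrime)
    (hpm : ∀ y ∈ p1, ((y : R) : V) ∈ IsLocalRing.maximalIdeal V) :
    ∃ Q1 : Ideal A, Q1.IsPrime ∧ Q1.comap f = p1 ∧ ∀ a : A, a ∈ Q1 ↔ ∃ y ∈ p1, f y = a := by
  have hfinj : Function.Injective f := by
    intro a b hab
    have : ι ((a:R):V) = ι ((b:R):V) := by rw [← hf, ← hf, hab]
    exact Subtype.ext (hιi this)
  set Q1 : Ideal A :=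
    { carrier := {a | ∃ y ∈ p1, f y = a}
      zero_mem' := ⟨0, p1.zero_mem, map_zero f⟩
      add_mem' := by
        rintro a b ⟨y, hy, rfl⟩ ⟨y', hy', rfl⟩
        exact ⟨y + y', p1.add_mem hy hy', map_add f y y'⟩
      smul_mem' := by
        rintro c a ⟨y, hy, rfl⟩
        obtain ⟨w, hw⟩ := hA c
        obtain ⟨z, hz, hzv⟩ := DM.videal hker hR p1 hp1 hpm w hy
        refine ⟨z, hz, ?_⟩
        apply Subtype.ext
        show ((f z : A) : FractionRing R) = ((c * f y : A) : FractionRing R)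
        rw [hf]
        push_cast
        rw [← hw, hf, hzv, map_mul] } with hQ1def
  have hchar : ∀ a : A, a ∈ Q1 ↔ ∃ y ∈ p1, f y = a := fun a => ⟨fun h => h, fun h => h⟩
  have hprime : Q1.IsPrime := by
    constructor
    · intro htop
      have h1 : (1 : A) ∈ Q1 := htop ▸ Submodule.mem_top
      obtain ⟨y, hy, hfy⟩ := (hchar 1).mp h1
      have : y = 1 := hfinj (by rw [hfy, map_one])
      exact hp1.ne_top (Ideal.eq_top_of_isUnit_mem p1 hy (this ▸ isUnit_one))
    · intro a b hab
      obtain ⟨y, hy, hfy⟩ := (hchar _).mp hab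
      obtain ⟨w1, hw1⟩ := hA a
      obtain ⟨w2, hw2⟩ := hA b
      have hww : w1 * w2 = ((y : R) : V) := by
        apply hιi
        rw [map_mul, hw1, hw2, ← hf, hfy]
        push_cast
        rfl
      by_cases hm1 : w1 ∈ IsLocalRing.maximalIdeal V
      · by_cases hm2 : w2 ∈ IsLocalRing.maximalIdeal V
        · set r1 : R := ⟨w1, DM.m_le_R hker hR hm1⟩
          set r2 : R := ⟨w2, DM.m_le_R hker hR hm2⟩
          have : r1 * r2 ∈ p1 := by
            have : r1 * r2 = y := Subtype.ext (by push_cast; exact hww)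
            rw [this]; exact hy
          rcases hp1.mem_or_mem this with h | h
          · left
            exact (hchar a).mpr ⟨r1, h, Subtype.ext (by rw [hf, ← hw1])⟩
          · right
            exact (hchar b).mpr ⟨r2, h, Subtype.ext (by rw [hf, ← hw2])⟩
        · -- w2 unit
          left
          obtain ⟨u, hu⟩ := ((DM.mem_m_iff_not_unit w2).not_left.mp
            (by simpa using hm2)).exists_right_inv
          have hw1y : w1 = u * ((y:R):V) := by
            calc w1 = w1 * (w2 * u) := by rw [hu, mul_one]
              _ = u * (w1 * w2) := by ring
              _ = u * ((y:R):V) := by rw [hww]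
          obtain ⟨z, hz, hzv⟩ := DM.videal hker hR p1 hp1 hpm u hy
          exact (hchar a).mpr ⟨z, hz, Subtype.ext (by rw [hf, hzv, ← hw1y, hw1])⟩
      · -- w1 unit
        right
        obtain ⟨u, hu⟩ := ((DM.mem_m_iff_not_unit w1).not_left.mp
          (by simpa using hm1)).exists_right_inv
        have hw2y : w2 = u * ((y:R):V) := by
          calc w2 = w2 * (w1 * u) := by rw [hu, mul_one]
            _ = u * (w1 * w2) := by ring
            _ = u * ((y:R):V) := by rw [hww]
        obtain ⟨z, hz, hzv⟩ := DM.videal hker hR p1 hp1 hpm u hy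
        exact (hchar b).mpr ⟨z, hz, Subtype.ext (by rw [hf, hzv, ← hw2y, hw2])⟩
  refine ⟨Q1, hprime, ?_, hchar⟩
  ext r
  rw [Ideal.mem_comap]
  constructor
  · intro h
    obtain ⟨y, hy, hfy⟩ := (hchar _).mp h
    exact hfinj hfy ▸ hy
  · intro h
    exact (hchar _).mpr ⟨r, h, rfl⟩

end DMsmall

section DMdir2
variable {D V : Type*} [CommRing D] [IsDomain D] [CommRing V] [IsDomain V] [ValuationRing V]
variable {π : V →+* FractionRing D} {R : Subring V}

set_option maxHeartbeats 2000000 in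
set_option synthInstance.maxHeartbeats 400000 in
theorem DM.dir2 (hsurj : Function.Surjective π)
    (hker : RingHom.ker π = IsLocalRing.maximalIdeal V)
    (hR : R = ((algebraMap D (FractionRing D)).range).comap π)
    {ι : V →+* FractionRing R} (hιi : Function.Injective ι)
    (hι2 : ∀ r : R, ι r = algebraMap R (FractionRing R) r)
    {ρ : R →+* D} (hρ : ∀ r : R, algebraMap D (FractionRing D) (ρ r) = π r)
    (hPR : PerinormalDomain R) : PerinormalDomain D := by
  have hρsurj : Function.Surjective ρ := DM.rho_surj hρ hsurj hR
  intro T hT hTloc hGD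
  set W : Subring V := T.comap π with hWdef
  have hRW : ∀ r : R, (r : V) ∈ W := by
    intro r
    show π r ∈ T
    rw [← hρ r]
    exact hT ⟨ρ r, rfl⟩
  set A : Subring (FractionRing R) := W.map ι with hAdef
  have hA1 : (algebraMap R (FractionRing R)).range ≤ A := by
    rintro x ⟨r, rfl⟩
    exact ⟨r, hRW r, hι2 r⟩
  have hAmem : ∀ a : A, ∃ w : V, w ∈ W ∧ ι w = (a : FractionRing R) := by
    rintro ⟨a, w, hw, he⟩
    exact ⟨w, hw, he⟩
  set θ0 : W →+* A := (ι.comp W.subtype).codRestrict A (fun w => ⟨w, w.2, rfl⟩) with hθ0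
  have hθbij : Function.Bijective θ0 := by
    constructor
    · intro a b hab
      exact Subtype.ext (hιi (congrArg Subtype.val hab))
    · intro a
      obtain ⟨w, hw, he⟩ := hAmem a
      exact ⟨⟨w, hw⟩, Subtype.ext he⟩
  have hWloc : IsLocalRing W := by
    apply DM.local_of_hom ((π.comp W.subtype).codRestrict T (fun w => w.2)) hTloc
    intro w hu
    obtain ⟨t, ht⟩ := hu.exists_right_inv
    have hπw : π (w : V) * (t : FractionRing D) = 1 := congrArg Subtype.val ht
    have hπw0 : π (w : V) ≠ 0 := by
      intro h
      rw [h, zero_mul] at hπw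
      exact zero_ne_one hπw
    have hwm : (w : V) ∉ IsLocalRing.maximalIdeal V := by
      rw [DM.mem_m hker]; exact hπw0
    obtain ⟨u, hu'⟩ := ((DM.mem_m_iff_not_unit ((w : W) : V)).not_left.mp
      (by simpa using hwm)).exists_right_inv
    have hπu : π u = (t : FractionRing D) := by
      apply mul_left_cancel₀ hπw0
      rw [hπw, ← map_mul, hu', map_one]
    have hum : u ∈ W := by
      show π u ∈ T
      rw [hπu]; exact t.2
    exact isUnit_iff_exists_inv.mpr ⟨⟨u, hum⟩, Subtype.ext hu'⟩
  have hAloc : IsLocalRing A := by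
    haveI := hWloc
    exact IsLocalRing.of_surjective' (RingEquiv.ofBijective θ0 hθbij).toRingHom hθbij.2
  set θe : W ≃+* A := RingEquiv.ofBijective θ0 hθbij with hθe
  set φ : W →+* T := (π.comp W.subtype).codRestrict T (fun w => w.2) with hφ
  set ψ : A →+* T := φ.comp θe.symm.toRingHom with hψ
  have hψθ : ∀ w : W, ψ (θ0 w) = φ w := by
    intro w
    show φ (θe.symm (θe w)) = φ w
    rw [RingEquiv.symm_apply_apply]
  have hψs : Function.Surjective ψ := by
    intro t
    obtain ⟨v, hv⟩ := hsurj (t : FractionRing D)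
    have hvW : v ∈ W := by show π v ∈ T; rw [hv]; exact t.2
    exact ⟨θ0 ⟨v, hvW⟩, by rw [hψθ]; exact Subtype.ext hv⟩
  set fA : R →+* A := (algebraMap R (FractionRing R)).codRestrict A (fun x => hA1 ⟨x, rfl⟩)
    with hfA
  set fT : D →+* T := (algebraMap D (FractionRing D)).codRestrict T (fun x => hT ⟨x, rfl⟩)
    with hfT
  have hfAθ : ∀ r : R, fA r = θ0 ⟨(r : V), hRW r⟩ := by
    intro r
    apply Subtype.ext
    show algebraMap R (FractionRing R) r = ι ((r : R) : V)
    rw [hι2]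
  have hcomm : ∀ r : R, ψ (fA r) = fT (ρ r) := by
    intro r
    rw [hfAθ, hψθ]
    apply Subtype.ext
    show π ((r : R) : V) = algebraMap D (FractionRing D) (ρ r)
    rw [hρ]
  have hkerψ : ∀ a : A, ψ a = 0 → ∃ r : R, ρ r = 0 ∧ fA r = a := by
    intro a ha
    set w : W := θe.symm a with hw
    have hφw : φ w = 0 := ha
    have hπw : π (w : V) = 0 := congrArg Subtype.val hφw
    have hwm : (w : V) ∈ IsLocalRing.maximalIdeal V := (DM.mem_m hker _).mpr hπw
    refine ⟨⟨(w : V), DM.m_le_R hker hR hwm⟩, ?_, ?_⟩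
    · rw [DM.rho_ker hρ hker]; exact hwm
    · rw [hfAθ]
      have : (⟨((⟨(w : V), DM.m_le_R hker hR hwm⟩ : R) : V), hRW _⟩ : W) = w :=
        Subtype.ext rfl
      rw [this]
      show θe (θe.symm a) = a
      rw [RingEquiv.apply_symm_apply]
  have hGDA : GoingDownHom fA := by
    intro p1 p2 hp1 hp2 h12 Q2 hQ2 hQ2c
    by_cases hc : ∀ r : R, (r : V) ∈ IsLocalRing.maximalIdeal V → r ∈ p1
    · exact DM.GDup_case hρsurj hψs hcomm hkerψ hGD p1 p2 hp1 hp2 h12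
        (fun r hr => hc r ((DM.rho_ker hρ hker r).mp hr)) Q2 hQ2 hQ2c
    · push_neg at hc
      obtain ⟨x, hxm, hxp⟩ := hc
      have hpm := DM.prime_sub_m hker hR p1 hp1 ⟨x, hxm, hxp⟩
      obtain ⟨Q1, hQ1p, hQ1c, hQ1char⟩ := DM.small_prime hker hR hιi
        (fun a => (hAmem a).imp (fun w hw => hw.2))
        (f := fA) (fun r => (hι2 r).symm) p1 hp1 hpm
      refine ⟨Q1, hQ1p, ?_, hQ1c⟩
      rintro a ha
      obtain ⟨y, hy, rfl⟩ := (hQ1char a).mp ha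
      have h2 : y ∈ p2 := h12 hy
      rw [← hQ2c] at h2
      exact h2
  obtain ⟨P, hP, hset⟩ := hPR A hA1 hAloc hGDA
  by_cases hmP : ∀ r : R, (r : V) ∈ IsLocalRing.maximalIdeal V → r ∈ P
  · refine ⟨P.map ρ, Ideal.map_isPrime_of_surjective hρsurj
      (fun r hr => hmP r ((DM.rho_ker hρ hker r).mp (by simpa [RingHom.mem_ker] using hr))), ?_⟩
    ext x
    simp only [Set.mem_setOf_eq, SetLike.mem_coe]
    constructor
    · intro hx
      obtain ⟨v, hv⟩ := hsurj x
      have hvW : v ∈ W := by show π v ∈ T; rw [hv]; exact hx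
      have h2 : ι v ∈ (A : Set (FractionRing R)) := ⟨v, hvW, rfl⟩
      rw [hset] at h2
      obtain ⟨r, s, hs, he⟩ := h2
      have heV : v * (s : V) = (r : V) := by
        apply hιi
        rw [map_mul, hι2, hι2]
        exact he
      refine ⟨ρ r, ρ s, ?_, ?_⟩
      · intro hin
        obtain ⟨t, ht, hts⟩ := (Ideal.mem_map_iff_of_surjective ρ hρsurj).mp hin
        have hst : s - t ∈ P := hmP _ ((DM.rho_ker hρ hker (s - t)).mp
          (by rw [map_sub, hts, sub_self]))
        have : s ∈ P := by
          have := P.add_mem hst ht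
          simpa using this
        exact hs this
      · rw [← hv, hρ, hρ, ← map_mul, heV]
    · rintro ⟨d, e, he, hx⟩
      obtain ⟨se, hse⟩ := hρsurj e
      obtain ⟨sd, hsd⟩ := hρsurj d
      have hseP : se ∉ P := by
        intro h
        exact he (hse ▸ Ideal.mem_map_of_mem ρ h)
      obtain ⟨v, hv⟩ := hsurj x
      have hz : v * (se : V) - (sd : V) ∈ IsLocalRing.maximalIdeal V := by
        rw [DM.mem_m hker, map_sub, map_mul, hv, ← hρ se, ← hρ sd, hse, hsd, hx, sub_self]
      set z : R := ⟨v * (se : V) - (sd : V), DM.m_le_R hker hR hz⟩ with hzdef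
      have h2 : ι v ∈ {x : FractionRing R | ∃ r s : R, s ∉ P ∧
          x * algebraMap R (FractionRing R) s = algebraMap R (FractionRing R) r} := by
        refine ⟨sd + z, se, hseP, ?_⟩
        rw [← hι2, ← hι2, ← map_mul]
        congr 1
        push_cast
        ring
      rw [← hset] at h2
      obtain ⟨w, hwW, hwe⟩ := h2
      have : w = v := hιi hwe
      subst this
      show x ∈ T
      rw [← hv]
      exact hwW
  · push_neg at hmP
    have hPm := DM.prime_sub_m hker hR P hP hmP
    refine ⟨⊥, Ideal.bot_prime, ?_⟩
    ext x
    simp only [Set.mem_setOf_eq, SetLike.mem_coe]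
    constructor
    · intro hx
      obtain ⟨⟨d, e⟩, he⟩ := IsLocalization.surj (nonZeroDivisors D) x
      refine ⟨d, e, ?_, he⟩
      intro h0
      exact nonZeroDivisors.coe_ne_zero e (by simpa using h0)
    · rintro ⟨d, e, he, hx⟩
      obtain ⟨v, hv⟩ := hsurj x
      obtain ⟨r, s, hsm, hrs⟩ := DM.frac hsurj hker hR v
      have hsP : s ∉ P := fun h => hsm (hPm s h)
      have h2 : ι v ∈ {x : FractionRing R | ∃ r s : R, s ∉ P ∧
          x * algebraMap R (FractionRing R) s = algebraMap R (FractionRing R) r} :=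
        ⟨r, s, hsP, by rw [← hι2, ← hι2, ← map_mul, hrs]⟩
      rw [← hset] at h2
      obtain ⟨w, hwW, hwe⟩ := h2
      have : w = v := hιi hwe
      subst this
      show x ∈ T
      rw [← hv]
      exact hwW

end DMdir2
section DMdir1
variable {D V : Type*} [CommRing D] [IsDomain D] [CommRing V] [IsDomain V] [ValuationRing V]
variable {π : V →+* FractionRing D} {R : Subring V}

set_option maxHeartbeats 2000000 in
set_option synthInstance.maxHeartbeats 400000 in
theorem DM.dir1 (hsurj : Function.Surjective π)
    (hker : RingHom.ker π = IsLocalRing.maximalIdeal V)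
    (hR : R = ((algebraMap D (FractionRing D)).range).comap π)
    {ι : V →+* FractionRing R} (hιi : Function.Injective ι)
    (hι2 : ∀ r : R, ι r = algebraMap R (FractionRing R) r)
    {ρ : R →+* D} (hρ : ∀ r : R, algebraMap D (FractionRing D) (ρ r) = π r)
    (hPD : PerinormalDomain D) : PerinormalDomain R := by
  have hρsurj : Function.Surjective ρ := DM.rho_surj hρ hsurj hR
  intro T' hT' hT'loc hGD'
  set fA : R →+* T' := (algebraMap R (FractionRing R)).codRestrict T' (fun x => hT' ⟨x, rfl⟩)
    with hfA
  by_cases hsub : ∀ x ∈ T', ∃ v : V, ι v = x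
  · -- Case B : T' inside the image of V
    set W : Subring V := T'.comap ι with hW
    have hRW : ∀ r : R, (r : V) ∈ W := by
      intro r
      show ι r ∈ T'
      rw [hι2]
      exact hT' ⟨r, rfl⟩
    have hmW : ∀ v ∈ IsLocalRing.maximalIdeal V, v ∈ W := fun v hv =>
      hRW ⟨v, DM.m_le_R hker hR hv⟩
    set B : Subring (FractionRing D) := W.map π with hB
    have hB1 : (algebraMap D (FractionRing D)).range ≤ B := by
      rintro x ⟨d, rfl⟩
      obtain ⟨r, hr⟩ := DM.exists_rep hsurj hR d
      exact ⟨r, hRW r, hr⟩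
    set θ0 : W →+* T' := (ι.comp W.subtype).codRestrict T' (fun w => w.2) with hθ0
    have hθbij : Function.Bijective θ0 := by
      constructor
      · intro a b hab
        exact Subtype.ext (hιi (congrArg Subtype.val hab))
      · intro t
        obtain ⟨v, hv⟩ := hsub t t.2
        exact ⟨⟨v, show ι v ∈ T' from hv ▸ t.2⟩, Subtype.ext hv⟩
    have hWloc : IsLocalRing W := by
      apply DM.local_of_hom θ0 hT'loc
      intro w hu
      obtain ⟨t, ht⟩ := hu.exists_right_inv
      obtain ⟨u, hu'⟩ := hsub t t.2
      have h1 : ι ((w : V) * u) = 1 := by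
        rw [map_mul, hu']
        exact congrArg Subtype.val ht
      have huv : (w : V) * u = 1 := hιi (by rw [h1, map_one])
      have huW : u ∈ W := show ι u ∈ T' from hu' ▸ t.2
      exact isUnit_iff_exists_inv.mpr ⟨⟨u, huW⟩, Subtype.ext huv⟩
    set φ : W →+* B := (π.comp W.subtype).codRestrict B (fun w => ⟨w, w.2, rfl⟩) with hφ
    have hφs : Function.Surjective φ := by
      rintro ⟨b, w, hw, rfl⟩
      exact ⟨⟨w, hw⟩, rfl⟩
    have hBloc : IsLocalRing B := by
      haveI := hWloc
      exact IsLocalRing.of_surjective' φ hφs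
    set θe : W ≃+* T' := RingEquiv.ofBijective θ0 hθbij with hθe
    set ψ : T' →+* B := φ.comp θe.symm.toRingHom with hψ
    have hψθ : ∀ w : W, ψ (θ0 w) = φ w := by
      intro w
      show φ (θe.symm (θe w)) = φ w
      rw [RingEquiv.symm_apply_apply]
    have hψs : Function.Surjective ψ := by
      intro b
      obtain ⟨w, hw⟩ := hφs b
      exact ⟨θ0 w, by rw [hψθ]; exact hw⟩
    set fB : D →+* B := (algebraMap D (FractionRing D)).codRestrict B (fun x => hB1 ⟨x, rfl⟩)
      with hfB
    have hfAθ : ∀ r : R, fA r = θ0 ⟨(r : V), hRW r⟩ := by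
      intro r
      apply Subtype.ext
      show algebraMap R (FractionRing R) r = ι ((r : R) : V)
      rw [hι2]
    have hcomm : ∀ r : R, ψ (fA r) = fB (ρ r) := by
      intro r
      rw [hfAθ, hψθ]
      apply Subtype.ext
      show π ((r : R) : V) = algebraMap D (FractionRing D) (ρ r)
      rw [hρ]
    have hkerψ : ∀ a : T', ψ a = 0 → ∃ r : R, ρ r = 0 ∧ fA r = a := by
      intro a ha
      set w : W := θe.symm a with hw
      have hφw : φ w = 0 := ha
      have hπw : π (w : V) = 0 := congrArg Subtype.val hφw
      have hwm : (w : V) ∈ IsLocalRing.maximalIdeal V := (DM.mem_m hker _).mpr hπw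
      refine ⟨⟨(w : V), DM.m_le_R hker hR hwm⟩, ?_, ?_⟩
      · rw [DM.rho_ker hρ hker]; exact hwm
      · rw [hfAθ]
        have h2 : (⟨((⟨(w : V), DM.m_le_R hker hR hwm⟩ : R) : V), hRW _⟩ : W) = w :=
          Subtype.ext rfl
        rw [h2]
        show θe (θe.symm a) = a
        rw [RingEquiv.apply_symm_apply]
    have hGDB : GoingDownHom fB := DM.GDdown hρsurj hψs hcomm hkerψ hGD'
    obtain ⟨p', hp', hBset⟩ := hPD B hB1 hBloc hGDB
    refine ⟨p'.comap ρ, hp'.comap ρ, ?_⟩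
    ext x
    simp only [Set.mem_setOf_eq, SetLike.mem_coe]
    constructor
    · intro hx
      obtain ⟨v, hv⟩ := hsub x hx
      have hvW : v ∈ W := show ι v ∈ T' from hv ▸ hx
      have hπv : π v ∈ (B : Set (FractionRing D)) := ⟨v, hvW, rfl⟩
      rw [hBset] at hπv
      obtain ⟨d, e, he, heq⟩ := hπv
      obtain ⟨se, hse⟩ := hρsurj e
      obtain ⟨sd, hsd⟩ := hρsurj d
      have hseP : se ∉ p'.comap ρ := by
        intro h
        rw [Ideal.mem_comap, hse] at h
        exact he h
      have hz : v * (se : V) - (sd : V) ∈ IsLocalRing.maximalIdeal V := by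
        rw [DM.mem_m hker, map_sub, map_mul, ← hρ se, ← hρ sd, hse, hsd, heq, sub_self]
      refine ⟨sd + ⟨_, DM.m_le_R hker hR hz⟩, se, hseP, ?_⟩
      rw [← hv, ← hι2, ← hι2, ← map_mul]
      congr 1
      push_cast
      ring
    · rintro ⟨r, s, hs, he⟩
      have hρs : ρ s ∉ p' := fun h => hs (Ideal.mem_comap.mpr h)
      have hρs0 : ρ s ≠ 0 := fun h => hρs (h ▸ p'.zero_mem)
      have halg0 : algebraMap D (FractionRing D) (ρ s) ≠ 0 := fun h =>
        hρs0 (IsFractionRing.injective D (FractionRing D) (by rw [h, map_zero]))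
      have hinv : (algebraMap D (FractionRing D) (ρ s))⁻¹ ∈ (B : Set (FractionRing D)) := by
        rw [hBset]
        exact ⟨1, ρ s, hρs, by rw [inv_mul_cancel₀ halg0, map_one]⟩
      obtain ⟨w, hwW, hwe⟩ := hinv
      have h1 : π ((s : V) * w) = 1 := by
        rw [map_mul, ← hρ s, hwe, mul_inv_cancel₀ halg0]
      have hswm : (s : V) * w ∉ IsLocalRing.maximalIdeal V := by
        rw [DM.mem_m hker, h1]
        exact one_ne_zero
      obtain ⟨u, hu⟩ := ((DM.mem_m_iff_not_unit ((s : V) * w)).not_left.mp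
        (by simpa using hswm)).exists_right_inv
      have hπu : π u = 1 := by
        have h2 : π ((s : V) * w * u) = 1 := by rw [hu, map_one]
        rw [map_mul, h1, one_mul] at h2
        exact h2
      have huW : u ∈ W := by
        have hm : u - 1 ∈ IsLocalRing.maximalIdeal V := by
          rw [DM.mem_m hker, map_sub, hπu, map_one, sub_self]
        have h3 := W.add_mem (hmW _ hm) W.one_mem
        simpa using h3
      have hwuW : w * u ∈ W := W.mul_mem hwW huW
      have hs1 : algebraMap R (FractionRing R) s * ι (w * u) = 1 := by
        rw [← hι2, ← map_mul]
        have h4 : (s : V) * (w * u) = 1 := by rw [← mul_assoc]; exact hu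
        rw [h4, map_one]
      have hxe : x = algebraMap R (FractionRing R) r * ι (w * u) := by
        calc x = x * (algebraMap R (FractionRing R) s * ι (w * u)) := by rw [hs1, mul_one]
          _ = (x * algebraMap R (FractionRing R) s) * ι (w * u) := by ring
          _ = algebraMap R (FractionRing R) r * ι (w * u) := by rw [he]
      rw [hxe]
      exact T'.mul_mem (hT' ⟨r, rfl⟩) (show ι (w * u) ∈ T' from hwuW)
  · -- Case A : T' contains the image of V
    push_neg at hsub
    obtain ⟨t, htT, htι⟩ := hsub
    have ht0 : t ≠ 0 := fun h => htι 0 (by rw [map_zero, h])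
    rcases DM.dichot hιi hι2 hsurj hker hR t ht0 with ⟨v, hv⟩ | ⟨w0, hw0⟩
    · exact absurd hv (htι v)
    have hw0m : w0 ∈ IsLocalRing.maximalIdeal V := by
      rw [DM.mem_m_iff_not_unit]
      intro hu
      obtain ⟨u, hu'⟩ := hu.exists_right_inv
      apply htι u
      calc ι u = (t * ι w0) * ι u := by rw [hw0, one_mul]
        _ = t * ι (w0 * u) := by rw [map_mul]; ring
        _ = t := by rw [hu', map_one, mul_one]
    have hVT : ∀ v : V, ι v ∈ T' := by
      intro v
      have hvm : v * w0 ∈ IsLocalRing.maximalIdeal V :=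
        Ideal.mul_mem_left _ _ hw0m
      have h1 : ι (v * w0) ∈ T' := by
        rw [show v * w0 = ((⟨v * w0, DM.m_le_R hker hR hvm⟩ : R) : V) from rfl, hι2]
        exact hT' ⟨_, rfl⟩
      have h2 : ι v = ι (v * w0) * t := by
        calc ι v = ι v * (t * ι w0) := by rw [hw0, mul_one]
          _ = ι (v * w0) * t := by rw [map_mul]; ring
      rw [h2]
      exact T'.mul_mem h1 htT
    haveI := hT'loc
    set M := IsLocalRing.maximalIdeal T' with hM
    set P : Ideal R := M.comap fA with hPdef
    have hPp : P.IsPrime := (IsLocalRing.maximalIdeal.isMaximal T').isPrime.comap fA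
    have hPm : ∀ y : R, y ∈ P → (y : V) ∈ IsLocalRing.maximalIdeal V := by
      intro y hy
      by_contra hym
      obtain ⟨u, hu⟩ := ((DM.mem_m_iff_not_unit ((y : R) : V)).not_left.mp
        (by simpa using hym)).exists_right_inv
      have hyu : IsUnit (fA y) := by
        apply isUnit_iff_exists_inv.mpr
        refine ⟨⟨ι u, hVT u⟩, Subtype.ext ?_⟩
        show algebraMap R (FractionRing R) y * ι u = 1
        rw [← hι2, ← map_mul, hu, map_one]
      exact ((IsLocalRing.mem_maximalIdeal (fA y)).mp hy) hyu
    refine ⟨P, hPp, ?_⟩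
    ext x
    simp only [Set.mem_setOf_eq, SetLike.mem_coe]
    constructor
    · intro hx
      by_cases hx0 : x = 0
      · refine ⟨0, 1, ?_, by rw [hx0, map_zero, zero_mul]⟩
        intro h1
        exact hPp.ne_top (Ideal.eq_top_of_isUnit_mem _ h1 isUnit_one)
      rcases DM.dichot hιi hι2 hsurj hker hR x hx0 with ⟨v, hv⟩ | ⟨v, hv⟩
      · obtain ⟨r, s, hsm, hrs⟩ := DM.frac hsurj hker hR v
        have hsP : s ∉ P := fun h => hsm (hPm s h)
        exact ⟨r, s, hsP, by rw [← hv, ← hι2, ← hι2, ← map_mul, hrs]⟩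
      · obtain ⟨r, s, hsm, hrs⟩ := DM.frac hsurj hker hR v
        have hxr : x * algebraMap R (FractionRing R) r = algebraMap R (FractionRing R) s := by
          rw [← hι2, ← hι2]
          calc x * ι ((r : R) : V) = x * ι (v * s) := by rw [hrs]
            _ = (x * ι v) * ι ((s : R) : V) := by rw [map_mul]; ring
            _ = ι ((s : R) : V) := by rw [hv, one_mul]
        have hrP : r ∉ P := by
          intro h
          obtain ⟨u, hsu⟩ := ((DM.mem_m_iff_not_unit ((s : R) : V)).not_left.mp
            (by simpa using hsm)).exists_right_inv
          have hru : IsUnit (fA r) := by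
            apply isUnit_iff_exists_inv.mpr
            refine ⟨⟨x * ι u, T'.mul_mem hx (hVT u)⟩, Subtype.ext ?_⟩
            show algebraMap R (FractionRing R) r * (x * ι u) = 1
            calc algebraMap R (FractionRing R) r * (x * ι u)
                = (x * algebraMap R (FractionRing R) r) * ι u := by ring
              _ = algebraMap R (FractionRing R) s * ι u := by rw [hxr]
              _ = ι ((s : R) : V) * ι u := by rw [hι2]
              _ = ι (((s : R) : V) * u) := by rw [map_mul]
              _ = 1 := by rw [hsu, map_one]
          exact ((IsLocalRing.mem_maximalIdeal (fA r)).mp h) hru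
        exact ⟨s, r, hrP, hxr⟩
    · rintro ⟨r, s, hs, he⟩
      have hsu : IsUnit (fA s) := by
        by_contra h
        exact hs (show fA s ∈ M from (IsLocalRing.mem_maximalIdeal _).mpr h)
      obtain ⟨u, hu⟩ := hsu.exists_right_inv
      have h1 : algebraMap R (FractionRing R) s * (u : FractionRing R) = 1 :=
        congrArg Subtype.val hu
      have hxe : x = algebraMap R (FractionRing R) r * u := by
        calc x = x * (algebraMap R (FractionRing R) s * u) := by rw [h1, mul_one]
          _ = (x * algebraMap R (FractionRing R) s) * u := by ring
          _ = algebraMap R (FractionRing R) r * u := by rw [he]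
      rw [hxe]
      exact T'.mul_mem (hT' ⟨r, rfl⟩) u.2

end DMdir1

/-- **the classical `D + M` construction, and more.**  Let `D` be a domain with
fraction field `k`, and `V` a valuation domain with a surjection `π : V → k` whose kernel is
the maximal ideal of `V` (so `V` has residue field `k`).  If `R` is the pullback
`{v ∈ V : π v ∈ D}` of `D → k ← V`, then `R` is perinormal iff `D` is perinormal. -/
theorem perinormal_pullback_valuation_iff {D V : Type*} [CommRing D] [IsDomain D]
    [CommRing V] [IsDomain V] [ValuationRing V]
    (π : V →+* FractionRing D) (hsurj : Function.Surjective π)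
    (hker : RingHom.ker π = IsLocalRing.maximalIdeal V)
    (R : Subring V) (hR : R = ((algebraMap D (FractionRing D)).range).comap π) :
    PerinormalDomain R ↔ PerinormalDomain D := by
  obtain ⟨ι, hιi, hι2⟩ := DM.exists_iota hsurj hker hR
  obtain ⟨ρ, hρ⟩ := DM.exists_rho hR
  exact ⟨DM.dir2 hsurj hker hR hιi hι2 hρ, DM.dir1 hsurj hker hR hιi hι2 hρ⟩
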